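/- arXiv:1408.4317 — 2 statements merged into one kernel-verified Lean document; each statement's English description precedes it below -/
import Mathlib

section
/- The map φ : SL(m,ℝ) → GL(s(m)) given by φ(a)X = aXaᵀ is a group homomorphism into the special linear group of the vector space of real symmetric m×m matrices. -/
open Matrix

namespace Stmt3Aux

variable {n : Type*} [DecidableEq n] [Fintype n]

lemma prod_update_pair (i j : n) (hij : i ≠ j) (x y : ℝ) :
    ∏ k, Function.update (Function.update (1 : n → ℝ) i x) j y k = x * y := by
  rw [Finset.prod_update_of_mem (Finset.mem_univ j),
    Finset.prod_update_of_mem (by simp [hij] : i ∈ Finset.univ \ {j})]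
  simp [mul_comm]

lemma diag_mul_std (v w : n → ℝ) (i j : n) (c : ℝ) :
    diagonal v * single i j c * diagonal w = single i j (v i * c * w j) := by
  ext a b
  rw [Matrix.mul_diagonal, Matrix.diagonal_mul]
  by_cases ha : i = a <;> by_cases hb : j = b <;>
    simp [ha, hb, Matrix.single]

lemma diag_update_pair (i j : n) (hij : i ≠ j) (t : ℝ) :
    diagonal (Function.update (Function.update (1 : n → ℝ) i t) j t⁻¹) =
      1 + single i i (t - 1) + single j j (t⁻¹ - 1) := by
  ext a b
  by_cases hab : a = b
  · subst hab
    simp only [Matrix.diagonal_apply_eq, Function.update_apply, Matrix.add_apply,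
      Matrix.one_apply_eq, Matrix.single, Matrix.of_apply, Pi.one_apply, and_self]
    by_cases h1 : i = a <;> by_cases h2 : j = a <;> simp_all [eq_comm]
  · have h1 : ¬(i = a ∧ i = b) := fun h => hab (h.1.symm.trans h.2)
    have h2 : ¬(j = a ∧ j = b) := fun h => hab (h.1.symm.trans h.2)
    simp [Matrix.diagonal_apply_ne _ hab, Matrix.one_apply_ne hab,
      Matrix.single, h1, h2]

lemma w_identity (i j : n) (hij : i ≠ j) (t : ℝ) (ht : t ≠ 0) :
    transvection i j t * transvection j i (-t⁻¹) * transvection i j t *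
      (transvection i j (-1) * transvection j i 1 * transvection i j (-1)) =
    diagonal (Function.update (Function.update (1 : n → ℝ) i t) j t⁻¹) := by
  rw [diag_update_pair i j hij t]
  simp only [Matrix.transvection, mul_add, add_mul, one_mul, mul_one,
    Matrix.single_mul_single_same, hij, Ne.symm hij, ne_eq, not_false_iff,
    Matrix.single_mul_single_of_ne, add_zero, zero_add, mul_zero, zero_mul]
  ext a b
  simp only [Matrix.add_apply, Matrix.one_apply, Matrix.single, Matrix.of_apply]
  by_cases h1 : i = a <;> by_cases h2 : j = a <;> by_cases h3 : i = b <;> by_cases h4 : j = b <;>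
    simp_all

lemma update_pair_mul (i j : n) (x : ℝ) (hx : x ≠ 0) :
    (fun k => Function.update (Function.update (1 : n → ℝ) i x) j x⁻¹ k
      * Function.update (Function.update (1 : n → ℝ) i x⁻¹) j x k) = (1 : n → ℝ) := by
  funext k
  simp only [Pi.one_apply, Function.update_apply]
  split_ifs <;> simp_all

lemma transvection_conj (i j : n) (hij : i ≠ j) (c : ℝ) :
    diagonal (Function.update (Function.update (1 : n → ℝ) i (Real.sqrt 2)) j (Real.sqrt 2)⁻¹)
      * transvection i j c *
      diagonal (Function.update (Function.update (1 : n → ℝ) i (Real.sqrt 2)⁻¹) j (Real.sqrt 2))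
      = transvection i j (2 * c) := by
  have hs2 : Real.sqrt 2 * Real.sqrt 2 = 2 := Real.mul_self_sqrt (by norm_num)
  have hs0 : Real.sqrt 2 ≠ 0 := by positivity
  have hfun := update_pair_mul i j (Real.sqrt 2) hs0
  rw [Matrix.transvection, Matrix.transvection, mul_add, mul_one, add_mul, diag_mul_std,
    Matrix.diagonal_mul_diagonal, hfun]
  rw [show Matrix.diagonal (1 : n → ℝ) = (1 : Matrix n n ℝ) from Matrix.diagonal_one]
  congr 1
  rw [Function.update_of_ne hij, Function.update_self, Function.update_self]
  rw [mul_comm _ c, mul_assoc, hs2, mul_comm]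


open Matrix.SpecialLinearGroup in
lemma F_transvection (F : Matrix.SpecialLinearGroup n ℝ →* ℝˣ) (i j : n) (hij : i ≠ j) (c : ℝ)
    (hdet : det (transvection i j c) = 1) :
    F ⟨transvection i j c, hdet⟩ = 1 := by
  have hs0 : Real.sqrt 2 ≠ 0 := by positivity
  have hdl : det (diagonal
      (Function.update (Function.update (1 : n → ℝ) i (Real.sqrt 2)) j (Real.sqrt 2)⁻¹)) = 1 := by
    rw [Matrix.det_diagonal, prod_update_pair i j hij]
    exact mul_inv_cancel₀ hs0
  have hdr : det (diagonal
      (Function.update (Function.update (1 : n → ℝ) i (Real.sqrt 2)⁻¹) j (Real.sqrt 2))) = 1 := by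
    rw [Matrix.det_diagonal, prod_update_pair i j hij]
    exact inv_mul_cancel₀ hs0
  set T : Matrix.SpecialLinearGroup n ℝ := ⟨transvection i j c, hdet⟩ with hT
  set T2 : Matrix.SpecialLinearGroup n ℝ :=
    ⟨transvection i j (2 * c), Matrix.det_transvection_of_ne i j hij _⟩ with hT2
  set Dl : Matrix.SpecialLinearGroup n ℝ := ⟨_, hdl⟩ with hDl
  set Dr : Matrix.SpecialLinearGroup n ℝ := ⟨_, hdr⟩ with hDr
  have hsq : T * T = T2 := Subtype.ext (by
    show transvection i j c * transvection i j c = transvection i j (2 * c)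
    rw [Matrix.transvection_mul_transvection_same (h := hij) (c := c) (d := c), two_mul])
  have hconj : T2 = Dl * T * Dr := Subtype.ext (transvection_conj i j hij c).symm
  have hDD : Dl * Dr = 1 := Subtype.ext (by
    show diagonal _ * diagonal _ = _
    rw [Matrix.diagonal_mul_diagonal, update_pair_mul i j _ hs0,
      show Matrix.diagonal (1 : n → ℝ) = (1 : Matrix n n ℝ) from Matrix.diagonal_one, coe_one])
  have key : F T * F T = F T * 1 := by
    rw [← _root_.map_mul, hsq, hconj, _root_.map_mul, _root_.map_mul,
      mul_comm (F Dl) (F T), mul_assoc, ← _root_.map_mul, hDD, _root_.map_one, mul_one]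
  exact mul_left_cancel key


open Matrix.SpecialLinearGroup in
lemma F_diag_one (F : Matrix.SpecialLinearGroup n ℝ →* ℝˣ) (D : n → ℝ) (hall : ∀ k, D k = 1)
    (hdet : det (diagonal D) = 1) : F ⟨diagonal D, hdet⟩ = 1 := by
  have : (⟨diagonal D, hdet⟩ : Matrix.SpecialLinearGroup n ℝ) =
      (1 : Matrix.SpecialLinearGroup n ℝ) := Subtype.ext (by
    show diagonal D = _
    rw [show D = (1 : n → ℝ) from funext hall,
      show Matrix.diagonal (1 : n → ℝ) = (1 : Matrix n n ℝ) from Matrix.diagonal_one, coe_one])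
  rw [this, _root_.map_one]

open Matrix.SpecialLinearGroup in
lemma F_diagonal (F : Matrix.SpecialLinearGroup n ℝ →* ℝˣ) (D : n → ℝ) (hD : ∏ k, D k = 1)
    (hdet : det (diagonal D) = 1) : F ⟨diagonal D, hdet⟩ = 1 := by
  suffices H : ∀ (N : ℕ) (D : n → ℝ), ∏ k, D k = 1 →
      (Finset.univ.filter fun k => D k ≠ 1).card ≤ N →
      ∀ (hdet : det (diagonal D) = 1), F ⟨diagonal D, hdet⟩ = 1 by
    exact H _ D hD le_rfl hdet
  intro N
  induction N with
  | zero =>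
    intro D hD hc hdet
    refine F_diag_one F D (fun k => ?_) hdet
    by_contra h
    have : k ∈ Finset.univ.filter fun k => D k ≠ 1 := Finset.mem_filter.2 ⟨Finset.mem_univ k, h⟩
    have := Finset.card_pos.2 ⟨k, this⟩
    omega
  | succ N ih =>
    intro D hD hc hdet
    by_cases hall : ∀ k, D k = 1
    · exact F_diag_one F D hall hdet
    push_neg at hall
    obtain ⟨i, hi⟩ := hall
    have hne0 : ∀ k, D k ≠ 0 := fun k hk =>
      one_ne_zero (hD.symm.trans (Finset.prod_eq_zero (Finset.mem_univ k) hk))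
    have hj : ∃ j, j ≠ i ∧ D j ≠ 1 := by
      by_contra h
      push_neg at h
      have : ∏ k, D k = D i :=
        Finset.prod_eq_single i (fun b _ hb => h b hb) (fun h' => absurd (Finset.mem_univ i) h')
      exact hi (this.symm.trans hD)
    obtain ⟨j, hji, hj1⟩ := hj
    have hij : i ≠ j := Ne.symm hji
    set t := D i with ht
    set g : n → ℝ := Function.update (Function.update (1 : n → ℝ) i t) j t⁻¹ with hg
    set D' : n → ℝ := Function.update (Function.update D i 1) j (D j * t) with hD'
    have hsplit : ∀ k, D k = D' k * g k := by
      intro k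
      by_cases hk : k = j
      · subst hk
        rw [hD', hg, Function.update_self, Function.update_self, mul_assoc,
          mul_inv_cancel₀ (hne0 i), mul_one]
      · by_cases hk2 : k = i
        · subst hk2
          rw [hD', hg, Function.update_of_ne hij, Function.update_of_ne hij,
            Function.update_self, Function.update_self, one_mul]
        · rw [hD', hg, Function.update_of_ne hk, Function.update_of_ne hk,
            Function.update_of_ne hk2, Function.update_of_ne hk2, Pi.one_apply, mul_one]
    have hprodg : ∏ k, g k = 1 := by
      rw [hg, prod_update_pair i j hij]
      exact mul_inv_cancel₀ (hne0 i)
    have hprodD' : ∏ k, D' k = 1 := by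
      have h1 : ∏ k, D k = (∏ k, D' k) * ∏ k, g k := by
        rw [← Finset.prod_mul_distrib]
        exact Finset.prod_congr rfl (fun k _ => hsplit k)
      rw [hprodg, mul_one] at h1
      exact h1.symm.trans hD
    have hcard : (Finset.univ.filter fun k => D' k ≠ 1).card ≤ N := by
      have hmem : i ∈ Finset.univ.filter fun k => D k ≠ 1 :=
        Finset.mem_filter.2 ⟨Finset.mem_univ i, hi⟩
      have hsub : (Finset.univ.filter fun k => D' k ≠ 1) ⊆
          (Finset.univ.filter fun k => D k ≠ 1).erase i := by
        intro k hk
        rw [Finset.mem_filter] at hk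
        have hki : k ≠ i := by
          rintro rfl
          exact hk.2 (by rw [hD', Function.update_of_ne hij, Function.update_self])
        refine Finset.mem_erase.2 ⟨hki, Finset.mem_filter.2 ⟨Finset.mem_univ k, ?_⟩⟩
        by_cases hkj : k = j
        · subst hkj; exact hj1
        · intro h1
          exact hk.2 (by rw [hD', Function.update_of_ne hkj, Function.update_of_ne hki, h1])
      have := Finset.card_le_card hsub
      rw [Finset.card_erase_of_mem hmem] at this
      omega
    have hdetD' : det (diagonal D') = 1 := by rw [Matrix.det_diagonal]; exact hprodD'
    have hdetg : det (diagonal g) = 1 := by rw [Matrix.det_diagonal]; exact hprodg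
    have hFD' : F ⟨diagonal D', hdetD'⟩ = 1 := ih D' hprodD' hcard hdetD'
    have hFg : F ⟨diagonal g, hdetg⟩ = 1 := by
      have hw := w_identity i j hij t (hne0 i)
      have hdT : ∀ (a b : n) (hab : a ≠ b) (x : ℝ), det (transvection a b x) = 1 :=
        fun a b hab x => Matrix.det_transvection_of_ne a b hab x
      set A1 : Matrix.SpecialLinearGroup n ℝ := ⟨transvection i j t, hdT i j hij t⟩
      set A2 : Matrix.SpecialLinearGroup n ℝ := ⟨transvection j i (-t⁻¹), hdT j i hji _⟩
      set A3 : Matrix.SpecialLinearGroup n ℝ := ⟨transvection i j (-1), hdT i j hij _⟩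
      set A4 : Matrix.SpecialLinearGroup n ℝ := ⟨transvection j i 1, hdT j i hji _⟩
      have hfact : (⟨diagonal g, hdetg⟩ : Matrix.SpecialLinearGroup n ℝ) =
          A1 * A2 * A1 * (A3 * A4 * A3) := Subtype.ext (by
        simp only [coe_mul]
        exact hw.symm)
      have e1 : F A1 = 1 := F_transvection F i j hij t _
      have e2 : F A2 = 1 := F_transvection F j i hji _ _
      have e3 : F A3 = 1 := F_transvection F i j hij _ _
      have e4 : F A4 = 1 := F_transvection F j i hji _ _
      rw [hfact]
      simp only [_root_.map_mul, e1, e2, e3, e4, mul_one, one_mul]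
    set B1 : Matrix.SpecialLinearGroup n ℝ := ⟨diagonal D', hdetD'⟩
    set B2 : Matrix.SpecialLinearGroup n ℝ := ⟨diagonal g, hdetg⟩
    have hfact2 : (⟨diagonal D, hdet⟩ : Matrix.SpecialLinearGroup n ℝ) = B1 * B2 :=
      Subtype.ext (by
      show diagonal D = diagonal D' * diagonal g
      rw [Matrix.diagonal_mul_diagonal]
      exact congrArg _ (funext hsplit))
    rw [hfact2, _root_.map_mul, hFD', hFg, one_mul]


open Matrix.SpecialLinearGroup in
lemma F_all (F : Matrix.SpecialLinearGroup n ℝ →* ℝˣ) (g : Matrix.SpecialLinearGroup n ℝ) :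
    F g = 1 := by
  obtain ⟨L, L', D, h⟩ :=
    Matrix.Pivot.exists_list_transvec_mul_diagonal_mul_list_transvec (g : Matrix n n ℝ)
  set sl : Matrix.TransvectionStruct n ℝ → Matrix.SpecialLinearGroup n ℝ :=
    fun t => ⟨t.toMatrix, t.det⟩ with hsl
  have hcoe : ∀ (M : List (Matrix.TransvectionStruct n ℝ)),
      (((M.map sl).prod : Matrix.SpecialLinearGroup n ℝ) : Matrix n n ℝ)
        = (M.map Matrix.TransvectionStruct.toMatrix).prod := by
    intro M
    induction M with
    | nil => simp [coe_one]
    | cons t M ihM => rw [List.map_cons, List.prod_cons, coe_mul, ihM, List.map_cons,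
        List.prod_cons]
  have hprodD : ∏ k, D k = 1 := by
    have h1 : det (g : Matrix n n ℝ) = 1 := g.2
    rw [h, det_mul, det_mul, Matrix.TransvectionStruct.det_toMatrix_prod,
      Matrix.TransvectionStruct.det_toMatrix_prod, Matrix.det_diagonal] at h1
    simpa using h1
  have hdetD : det (diagonal D) = 1 := by rw [Matrix.det_diagonal]; exact hprodD
  have hfact : g = (L.map sl).prod * ⟨diagonal D, hdetD⟩ * (L'.map sl).prod := by
    apply Subtype.ext
    show (g : Matrix n n ℝ) = ((L.map sl).prod : Matrix n n ℝ) * diagonal D * ((L'.map sl).prod : Matrix n n ℝ)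
    rw [hcoe, hcoe]
    exact h
  have hFlist : ∀ (M : List (Matrix.TransvectionStruct n ℝ)), F (M.map sl).prod = 1 := by
    intro M
    induction M with
    | nil => simp
    | cons t M ihM =>
      rw [List.map_cons, List.prod_cons, _root_.map_mul, ihM, mul_one]
      obtain ⟨ti, tj, thij, tc⟩ := t
      exact F_transvection F ti tj thij tc _
  rw [hfact, map_mul F ((L.map sl).prod * ⟨diagonal D, hdetD⟩), map_mul F (L.map sl).prod ⟨diagonal D, hdetD⟩, hFlist, hFlist,
    F_diagonal F D hprodD hdetD, one_mul, mul_one]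

end Stmt3Aux

/-- The submodule of real symmetric `m × m` matrices. -/
def symS (m : ℕ) : Submodule ℝ (Matrix (Fin m) (Fin m) ℝ) where
  carrier := {X | X.transpose = X}
  add_mem' := by intro a b ha hb; simp_all [Matrix.transpose_add]
  zero_mem' := by simp
  smul_mem' := by intro c a ha; simp_all [Matrix.transpose_smul]

/-- The map `φ : SL(m,ℝ) → GL(s(m))`, `φ(a)X = aXaᵀ`, is a group homomorphism
into the special linear group of the space of real symmetric matrices:
it preserves products and identity, and every `φ(a)` has determinant `1`. -/
theorem stmt3 (m : ℕ) (hm : 2 ≤ m)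
    (φ : Matrix.SpecialLinearGroup (Fin m) ℝ → (symS m →ₗ[ℝ] symS m))
    (hφ : ∀ (a : Matrix.SpecialLinearGroup (Fin m) ℝ) (X : symS m),
      (φ a X : Matrix (Fin m) (Fin m) ℝ) =
        (a : Matrix (Fin m) (Fin m) ℝ) * X * (a : Matrix (Fin m) (Fin m) ℝ).transpose) :
    (∀ a b, φ (a * b) = (φ a).comp (φ b)) ∧ φ 1 = LinearMap.id ∧
      ∀ a, LinearMap.det (φ a) = 1 := by
  have hmul : ∀ a b, φ (a * b) = (φ a).comp (φ b) := by
    intro a b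
    apply LinearMap.ext
    intro X
    apply Subtype.ext
    rw [LinearMap.comp_apply]
    show ((φ (a * b)) X : Matrix (Fin m) (Fin m) ℝ) = ((φ a) ((φ b) X) : Matrix (Fin m) (Fin m) ℝ)
    rw [hφ, hφ, hφ, Matrix.SpecialLinearGroup.coe_mul, Matrix.transpose_mul]
    simp only [mul_assoc]
  have hone : φ 1 = LinearMap.id := by
    apply LinearMap.ext
    intro X
    apply Subtype.ext
    show ((φ 1) X : Matrix (Fin m) (Fin m) ℝ) = (X : Matrix (Fin m) (Fin m) ℝ)
    rw [hφ]
    simp [Matrix.SpecialLinearGroup.coe_one]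
  refine ⟨hmul, hone, ?_⟩
  intro a
  let G : Matrix.SpecialLinearGroup (Fin m) ℝ →* ℝ :=
    { toFun := fun a => LinearMap.det (φ a)
      map_one' := by show LinearMap.det (φ 1) = 1; rw [hone]; exact LinearMap.det_id
      map_mul' := by
        intro a b
        show LinearMap.det (φ (a * b)) = LinearMap.det (φ a) * LinearMap.det (φ b)
        rw [hmul]; exact LinearMap.det_comp _ _ }
  have h1 := Stmt3Aux.F_all G.toHomUnits a
  have h2 : G a = 1 := by rw [← MonoidHom.coe_toHomUnits G a, h1, Units.val_one]
  exact h2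
end

section
/- For any traceless Hermitian m×m matrix X, the real-linear map on the space of traceless Hermitian matrices Y ↦ XY + YX − (2/m)tr(XY)·I is traceless as a real-linear endomorphism. -/
open LinearMap Matrix Complex

section Aux

/-- bridge: real trace of a complex-linear endomorphism -/
lemma aux_real_trace_eq (V : Type) [AddCommGroup V] [Module ℂ V] [FiniteDimensional ℂ V]
    (f : V →ₗ[ℂ] V) :
    LinearMap.trace ℝ V (f.restrictScalars ℝ) = 2 * (LinearMap.trace ℂ V f).re := by
  classical
  let b := Module.finBasis ℂ V
  let c := Complex.basisOneI.smulTower b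
  rw [LinearMap.trace_eq_matrix_trace ℝ c, LinearMap.trace_eq_matrix_trace ℂ b]
  have h : ∀ (k : Fin 2) (l), (LinearMap.toMatrix c c (f.restrictScalars ℝ)) (k,l) (k,l)
      = (b.repr (f (b l)) l).re := by
    intro k l
    rw [LinearMap.toMatrix_apply]
    have hc : c (k, l) = Complex.basisOneI k • b l := Module.Basis.smulTower_apply _ _ _
    rw [hc, LinearMap.restrictScalars_apply, _root_.map_smul, Module.Basis.smulTower_repr]
    simp only [_root_.map_smul, Finsupp.smul_apply, smul_eq_mul]
    fin_cases k <;>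
      simp [Complex.coe_basisOneI, Complex.coe_basisOneI_repr, Complex.smul_re, Complex.I_mul_re]
  rw [Matrix.trace, Matrix.trace]
  simp only [Matrix.diag]
  rw [← Finset.univ_product_univ, Finset.sum_product]
  simp only [h]
  rw [Fin.sum_univ_two, Complex.re_sum]
  simp only [LinearMap.toMatrix_apply]
  ring

variable (m : ℕ) (X : Matrix (Fin m) (Fin m) ℂ)

/-- the complex-linear version of the map -/
noncomputable def auxG : Matrix (Fin m) (Fin m) ℂ →ₗ[ℂ] Matrix (Fin m) (Fin m) ℂ :=
  LinearMap.mulLeft ℂ X + LinearMap.mulRight ℂ X -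
    ((Matrix.traceLinearMap (Fin m) ℂ ℂ) ∘ₗ LinearMap.mulLeft ℂ X).smulRight
      ((2/(m:ℂ)) • (1 : Matrix (Fin m) (Fin m) ℂ))

lemma auxG_apply (Y : Matrix (Fin m) (Fin m) ℂ) :
    auxG m X Y = X * Y + Y * X - ((2/(m:ℂ)) * (X * Y).trace) • 1 := by
  simp only [auxG, LinearMap.sub_apply, LinearMap.add_apply, LinearMap.mulLeft_apply,
    LinearMap.mulRight_apply, LinearMap.smulRight_apply, LinearMap.comp_apply,
    Matrix.traceLinearMap_apply, smul_smul, mul_comm]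

lemma auxG_traceC (hXtr : X.trace = 0) :
    LinearMap.trace ℂ _ (auxG m X) = 0 := by
  classical
  rw [LinearMap.trace_eq_matrix_trace ℂ (Matrix.stdBasis ℂ (Fin m) (Fin m))]
  rw [Matrix.trace]
  have hrepr : ∀ (A : Matrix (Fin m) (Fin m) ℂ) (pq : Fin m × Fin m),
      (Matrix.stdBasis ℂ (Fin m) (Fin m)).repr A pq = A pq.1 pq.2 := by
    intro A pq
    simp [Matrix.stdBasis, Pi.basis_repr]
  have h : ∀ pq : Fin m × Fin m,
      (LinearMap.toMatrix (Matrix.stdBasis ℂ (Fin m) (Fin m))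
        (Matrix.stdBasis ℂ (Fin m) (Fin m)) (auxG m X)) pq pq
      = X pq.1 pq.1 + X pq.2 pq.2
        - (2/(m:ℂ)) * X pq.2 pq.1 * (if pq.1 = pq.2 then 1 else 0) := by
    rintro ⟨p, q⟩
    rw [LinearMap.toMatrix_apply, hrepr, Matrix.stdBasis_eq_single, auxG_apply]
    have htr : (X * Matrix.single p q (1:ℂ)).trace = X q p := by
      rw [Matrix.trace_mul_comm]
      simp [Matrix.trace, Matrix.diag, Matrix.mul_apply, Matrix.single,
        Finset.sum_ite_eq, ite_and]
    rw [htr]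
    simp only [Matrix.sub_apply, Matrix.add_apply, Matrix.smul_apply, Matrix.one_apply,
      Matrix.mul_single_apply_same, Matrix.single_mul_apply_same,
      smul_eq_mul]
    ring_nf
  simp only [Matrix.diag, h]
  rw [← Finset.univ_product_univ, Finset.sum_product]
  have hXtr' : ∑ p : Fin m, X p p = 0 := hXtr
  simp only [mul_ite, mul_one, mul_zero, Finset.sum_sub_distrib, Finset.sum_add_distrib,
    Finset.sum_ite_eq, Finset.mem_univ, if_true, Finset.sum_const, Finset.card_univ,
    Fintype.card_fin, nsmul_eq_mul, hXtr', Finset.mul_sum]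
  rw [← Finset.mul_sum, ← Finset.mul_sum, hXtr']
  ring

end Aux

/-- The real vector space of traceless complex Hermitian `m × m` matrices. -/
noncomputable def herm0 (m : ℕ) : Submodule ℝ (Matrix (Fin m) (Fin m) ℂ) :=
  selfAdjoint.submodule ℝ (Matrix (Fin m) (Fin m) ℂ) ⊓
    LinearMap.ker ((Matrix.traceLinearMap (Fin m) ℂ ℂ).restrictScalars ℝ)

set_option maxHeartbeats 1000000 in
set_option synthInstance.maxHeartbeats 1000000 in
/-- For a traceless Hermitian matrix `X`, the real-linear endomorphism
`Y ↦ XY + YX − (2/m)tr(XY)·I` of the space of traceless Hermitian matrices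
has trace zero. -/
theorem stmt7 (m : ℕ) (hm : 2 ≤ m) (X : Matrix (Fin m) (Fin m) ℂ)
    (hX : X.IsHermitian) (hXtr : X.trace = 0)
    (f : herm0 m →ₗ[ℝ] herm0 m)
    (hf : ∀ Y : herm0 m,
      (f Y : Matrix (Fin m) (Fin m) ℂ) =
        X * Y + (Y : Matrix (Fin m) (Fin m) ℂ) * X -
          ((2 / (m : ℂ)) * (X * (Y : Matrix (Fin m) (Fin m) ℂ)).trace) • 1) :
    LinearMap.trace ℝ (herm0 m) f = 0 := by
  classical
  haveI : Module.Finite ℝ (Matrix (Fin m) (Fin m) ℂ) :=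
    Module.Finite.trans ℂ (Matrix (Fin m) (Fin m) ℂ)
  let p : Submodule ℝ (Matrix (Fin m) (Fin m) ℂ) := selfAdjoint.submodule ℝ (Matrix (Fin m) (Fin m) ℂ)
  let q : Submodule ℝ (Matrix (Fin m) (Fin m) ℂ) := skewAdjoint.submodule ℝ (Matrix (Fin m) (Fin m) ℂ)
  let g : Matrix (Fin m) (Fin m) ℂ →ₗ[ℝ] Matrix (Fin m) (Fin m) ℂ := (auxG m X).restrictScalars ℝ
  have hm0 : (m : ℂ) ≠ 0 := by
    exact_mod_cast Nat.cast_ne_zero.mpr (by omega)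
  have hg_apply : ∀ Y : Matrix (Fin m) (Fin m) ℂ, g Y = X * Y + Y * X - ((2/(m:ℂ)) * (X * Y).trace) • 1 :=
    fun Y => auxG_apply m X Y
  -- g maps self-adjoint elements into herm0
  have hg_mem : ∀ Y : Matrix (Fin m) (Fin m) ℂ, Y ∈ p → g Y ∈ herm0 m := by
    intro Y hY
    have hY' : Yᴴ = Y := hY
    have htr : star ((X * Y).trace) = (X * Y).trace := by
      rw [← Matrix.trace_conjTranspose, Matrix.conjTranspose_mul, hY', hX.eq,
        Matrix.trace_mul_comm]
    have h1 : (g Y)ᴴ = g Y := by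
      rw [hg_apply]
      rw [Matrix.conjTranspose_sub, Matrix.conjTranspose_add, Matrix.conjTranspose_mul,
        Matrix.conjTranspose_mul, hY', hX.eq, Matrix.conjTranspose_smul,
        Matrix.conjTranspose_one, star_mul', htr]
      have h2 : star ((2:ℂ)/(m:ℂ)) = (2:ℂ)/(m:ℂ) := by simp [Complex.ext_iff]
      rw [h2]
      abel
    have h2 : (g Y).trace = 0 := by
      rw [hg_apply]
      rw [Matrix.trace_sub, Matrix.trace_add, Matrix.trace_smul, Matrix.trace_one,
        Matrix.trace_mul_comm Y X, Fintype.card_fin, smul_eq_mul]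
      field_simp
      ring
    exact Submodule.mem_inf.mpr ⟨selfAdjoint.mem_iff.mpr h1, LinearMap.mem_ker.mpr h2⟩
  have hle : herm0 m ≤ p := inf_le_left
  have hps : ∀ Y : Matrix (Fin m) (Fin m) ℂ, Y ∈ p → Complex.I • Y ∈ q := by
    intro Y hY
    have hY' : Yᴴ = Y := hY
    show (Complex.I • Y)ᴴ = -(Complex.I • Y)
    rw [Matrix.conjTranspose_smul, hY']
    simp [Complex.ext_iff]
  have hqs : ∀ Z : Matrix (Fin m) (Fin m) ℂ, Z ∈ q → (-Complex.I) • Z ∈ p := by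
    intro Z hZ
    have hZ' : Zᴴ = -Z := hZ
    show ((-Complex.I) • Z)ᴴ = (-Complex.I) • Z
    rw [Matrix.conjTranspose_smul, hZ']
    simp [Complex.ext_iff]
  have hgsmul : ∀ (z : ℂ) (Y : Matrix (Fin m) (Fin m) ℂ), g (z • Y) = z • g Y := fun z Y => map_smul (auxG m X) z Y
  have hmapp : Set.MapsTo g p p := fun Y hY => hle (hg_mem Y hY)
  have hmapq : Set.MapsTo g q q := by
    intro Z hZ
    have h1 : ((-Complex.I) • Z) ∈ p := hqs Z hZ
    have h2 : g Z = Complex.I • g ((-Complex.I) • Z) := by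
      rw [hgsmul, smul_smul]
      simp
    rw [h2]
    exact hps _ (hmapp h1)
  -- the internal direct sum decomposition
  have hcompl : IsCompl p q := by
    constructor
    · rw [disjoint_iff_inf_le]
      rintro Y ⟨hY1, hY2⟩
      have h1 : Yᴴ = Y := hY1
      have h2 : Yᴴ = -Y := hY2
      have hYY : Y = -Y := h1.symm.trans h2
      have h3 : (2:ℝ) • Y = 0 := by
        rw [two_smul]
        exact add_eq_zero_iff_eq_neg.mpr hYY
      have h4 : Y = 0 := by
        rcases smul_eq_zero.mp h3 with h | h
        · norm_num at h
        · exact h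
      exact (Submodule.mem_bot ℝ).mpr h4
    · rw [codisjoint_iff_le_sup]
      intro Y _
      refine Submodule.mem_sup.mpr ⟨selfAdjointPart ℝ Y, (selfAdjointPart ℝ Y).2,
        skewAdjointPart ℝ Y, (skewAdjointPart ℝ Y).2, ?_⟩
      exact StarModule.selfAdjointPart_add_skewAdjointPart ℝ Y
  let N : Bool → Submodule ℝ (Matrix (Fin m) (Fin m) ℂ) := fun b => if b then p else q
  have hInternal : DirectSum.IsInternal N := by
    rw [DirectSum.isInternal_submodule_iff_isCompl N (i := true) (j := false) (by simp)
      (by ext b; cases b <;> simp)]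
    simpa [N] using hcompl
  have hmaps : ∀ b, Set.MapsTo g (N b) (N b) := by
    intro b; cases b
    · simpa [N] using hmapq
    · simpa [N] using hmapp
  have htraceM : LinearMap.trace ℝ (Matrix (Fin m) (Fin m) ℂ) g = 0 := by
    show LinearMap.trace ℝ (Matrix (Fin m) (Fin m) ℂ) ((auxG m X).restrictScalars ℝ) = 0
    rw [aux_real_trace_eq, auxG_traceC m X hXtr]
    simp
  have hsum := LinearMap.trace_eq_sum_trace_restrict hInternal hmaps
  rw [htraceM, Fintype.sum_bool] at hsum
  -- trace on q equals trace on p via multiplication by I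
  let e : p ≃ₗ[ℝ] q :=
    { toFun := fun y => ⟨Complex.I • (y : Matrix (Fin m) (Fin m) ℂ), hps _ y.2⟩
      map_add' := by intro a b; apply Subtype.ext; simp [smul_add]
      map_smul' := by
        intro r a
        apply Subtype.ext
        simp only [SetLike.val_smul, RingHom.id_apply]
        exact smul_comm _ _ _
      invFun := fun z => ⟨(-Complex.I) • (z : Matrix (Fin m) (Fin m) ℂ), hqs _ z.2⟩
      left_inv := by intro y; apply Subtype.ext; simp [smul_smul]
      right_inv := by intro z; apply Subtype.ext; simp [smul_smul] }
  have hconj : g.restrict (hmaps false) = e.conj (g.restrict (hmaps true)) := by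
    apply LinearMap.ext
    intro z
    apply Subtype.ext
    show g (z : Matrix (Fin m) (Fin m) ℂ)
        = Complex.I • g ((-Complex.I) • (z : Matrix (Fin m) (Fin m) ℂ))
    rw [hgsmul, smul_smul]
    simp
  have htq : LinearMap.trace ℝ (N false) (g.restrict (hmaps false))
      = LinearMap.trace ℝ (N true) (g.restrict (hmaps true)) := by
    show LinearMap.trace ℝ q (g.restrict (hmaps false)) = LinearMap.trace ℝ p _
    rw [hconj, LinearMap.trace_conj']
  have htp : LinearMap.trace ℝ (N true) (g.restrict (hmaps true)) = 0 := by
    rw [htq] at hsum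
    linarith
  -- restrict further to herm0
  let P : Submodule ℝ p := (herm0 m).comap p.subtype
  have hmemP : ∀ y : p, (g.restrict (hmaps true)) y ∈ P := by
    intro y
    exact hg_mem (y : Matrix (Fin m) (Fin m) ℂ) y.2
  have htP : LinearMap.trace ℝ P ((g.restrict (hmaps true)).restrict
      (fun x _ => hmemP x)) = 0 := by
    rw [LinearMap.trace_restrict_eq_of_forall_mem P _ hmemP]
    exact htp
  let ee : P ≃ₗ[ℝ] herm0 m := Submodule.comapSubtypeEquivOfLe hle
  have hfeq : f = ee.conj (((g.restrict (hmaps true)).restrict (fun x _ => hmemP x))) := by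
    apply LinearMap.ext
    intro Y
    apply Subtype.ext
    have hR : (((ee.conj ((g.restrict (hmaps true)).restrict (fun x _ => hmemP x))) Y :
        herm0 m) : Matrix (Fin m) (Fin m) ℂ) = g (Y : Matrix (Fin m) (Fin m) ℂ) := rfl
    rw [hR, hf Y, hg_apply]
  rw [hfeq]
  have hfin := LinearMap.trace_conj' (R := ℝ) (M := P) (N := herm0 m) ((g.restrict (hmaps true)).restrict
    (fun x _ => hmemP x)) ee
  rw [hfin]
  exact htP
end
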